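/- (Formal uniformization) With P idempotent linear filtration-preserving on a complete filtered associative algebra A, there exists a unique bijection Ψ: A_{1,+} × A_{1,−} → A_{1,−} × A_{1,+} such that for all (a_+, a_−) ∈ A_{1,+} × A_{1,−}: exp(a_+)exp(a_−) = exp(π_−(Ψ(a_+,a_−))) exp(π_+(Ψ(a_+,a_−))), where π_± are the projections onto A_{1,±}. -/

import Mathlib

open scoped BigOperators

noncomputable def expS (K : Type*) {A : Type*} [Field K] [CharZero K] [Ring A] [Algebra K A]
    [UniformSpace A] (a : A) : A :=
  ∑' n : ℕ, ((n.factorial : K)⁻¹) • a ^ n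

noncomputable def logS (K : Type*) {A : Type*} [Field K] [CharZero K] [Ring A] [Algebra K A]
    [UniformSpace A] (a : A) : A :=
  ∑' n : ℕ, (((-1 : K) ^ n) * ((n : K) + 1)⁻¹) • (a - 1) ^ (n + 1)

noncomputable def BCHs (K : Type*) {A : Type*} [Field K] [CharZero K] [Ring A] [Algebra K A]
    [UniformSpace A] (x y : A) : A :=
  logS K (expS K x * expS K y) - x - y

/-- A complete decreasing multiplicative filtration defining the topology of `A`. -/
def IsCompleteFiltration (K : Type*) {A : Type*} [Field K] [CharZero K] [Ring A] [Algebra K A]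
    [UniformSpace A] (F : ℕ → Submodule K A) : Prop :=
  F 0 = ⊤ ∧ (∀ n, F (n + 1) ≤ F n) ∧
    (∀ m n : ℕ, ∀ x ∈ F m, ∀ y ∈ F n, x * y ∈ F (m + n)) ∧
    (∀ n, IsOpen ((F n : Set A))) ∧
    (∀ U ∈ nhds (0 : A), ∃ n, ((F n : Set A)) ⊆ U)

variable {K : Type*} [Field K] [CharZero K] {A : Type*} [Ring A] [Algebra K A]
  [UniformSpace A] [CompleteSpace A] [T2Space A] [IsTopologicalRing A]
  [IsUniformAddGroup A]

set_option linter.unusedSectionVars false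
set_option maxHeartbeats 1000000

namespace Stmt7Aux

variable {K : Type*} [Field K] [CharZero K] {A : Type*} [Ring A] [Algebra K A]
  [UniformSpace A] [CompleteSpace A] [T2Space A] [IsTopologicalRing A]
  [IsUniformAddGroup A] {F : ℕ → Submodule K A}

theorem mono (hF : IsCompleteFiltration K F) {m n : ℕ} (h : m ≤ n) : F n ≤ F m := by
  induction n with
  | zero => simp_all
  | succ k ih =>
    rcases Nat.lt_or_ge m (k+1) with h' | h'
    · exact le_trans (hF.2.1 k) (ih (Nat.lt_succ_iff.mp h'))
    · have : m = k + 1 := le_antisymm h h'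
      subst this; exact le_rfl

theorem mem_nhds (hF : IsCompleteFiltration K F) (n : ℕ) : (F n : Set A) ∈ nhds 0 :=
  (hF.2.2.2.1 n).mem_nhds (zero_mem _)

theorem closed (hF : IsCompleteFiltration K F) (n : ℕ) : IsClosed (F n : Set A) :=
  AddSubgroup.isClosed_of_isOpen (F n).toAddSubgroup (hF.2.2.2.1 n)

theorem eq_zero (hF : IsCompleteFiltration K F) {z : A} (h : ∀ n, z ∈ F n) : z = 0 := by
  by_contra hz
  have hU : ({z}ᶜ : Set A) ∈ nhds (0 : A) :=
    (isOpen_compl_singleton).mem_nhds (by simpa using (Ne.symm hz))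
  obtain ⟨n, hn⟩ := hF.2.2.2.2 _ hU
  exact hn (h n) rfl

theorem mul_left (hF : IsCompleteFiltration K F) {m : ℕ} (z : A) {w : A} (hw : w ∈ F m) :
    z * w ∈ F m := by
  have := hF.2.2.1 0 m z (by rw [hF.1]; trivial) w hw
  simpa using this

theorem mul_right (hF : IsCompleteFiltration K F) {m : ℕ} {w : A} (hw : w ∈ F m) (z : A) :
    w * z ∈ F m := by
  have := hF.2.2.1 m 0 w hw z (by rw [hF.1]; trivial)
  simpa using this

theorem pow_mem (hF : IsCompleteFiltration K F) {a : A} (ha : a ∈ F 1) (k : ℕ) :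
    a ^ k ∈ F k := by
  induction k with
  | zero => rw [pow_zero, hF.1]; trivial
  | succ k ih => rw [pow_succ]; exact hF.2.2.1 k 1 _ ih a ha

theorem tsum_mem (hF : IsCompleteFiltration K F) {n : ℕ} {f : ℕ → A}
    (h : ∀ k, f k ∈ F n) : ∑' k, f k ∈ F n := by
  by_cases hs : Summable f
  · exact (closed hF n).mem_of_tendsto hs.hasSum
      (Filter.Eventually.of_forall fun s => Submodule.sum_mem _ fun i _ => h i)
  · rw [tsum_eq_zero_of_not_summable hs]; exact zero_mem _

theorem summable_of_mem (hF : IsCompleteFiltration K F) {f : ℕ → A}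
    (h : ∀ k, f k ∈ F k) : Summable f := by
  rw [summable_iff_vanishing]
  intro e he
  obtain ⟨N, hN⟩ := hF.2.2.2.2 e he
  refine ⟨Finset.range N, fun t ht => hN ?_⟩
  refine Submodule.sum_mem _ fun i hi => ?_
  have : N ≤ i := by
    by_contra hc
    exact (Finset.disjoint_left.mp ht hi) (Finset.mem_range.mpr (Nat.lt_of_not_le hc))
  exact mono hF this (h i)

/-- the terms of the exponential series -/
noncomputable def term (K : Type*) [Field K] [CharZero K] {A : Type*} [Ring A] [Algebra K A]
    (a : A) (k : ℕ) : A := ((k.factorial : K)⁻¹) • a ^ k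

theorem expS_eq (a : A) : expS K a = ∑' k, term K a k := rfl

theorem term_mem (hF : IsCompleteFiltration K F) {a : A} (ha : a ∈ F 1) (k : ℕ) :
    term K a k ∈ F k := Submodule.smul_mem _ _ (pow_mem hF ha k)

theorem summable_term (hF : IsCompleteFiltration K F) {a : A} (ha : a ∈ F 1) :
    Summable (term K a) := summable_of_mem hF (term_mem hF ha)

theorem term_zero (a : A) : term K a 0 = 1 := by simp [term]

theorem term_one (a : A) : term K a 1 = a := by simp [term]

theorem expS_zero : expS K (0 : A) = 1 := by
  rw [expS_eq, tsum_eq_single 0 (fun k hk => by simp [term, zero_pow hk])]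
  simp [term]

theorem expS_sub_one_mem (hF : IsCompleteFiltration K F) {a : A} (ha : a ∈ F 1) :
    expS K a - 1 ∈ F 1 := by
  have h0 : expS K a = term K a 0 + ∑' k, term K a (k + 1) :=
    Summable.tsum_eq_zero_add (summable_term hF ha)
  rw [term_zero] at h0
  have : expS K a - 1 = ∑' k, term K a (k + 1) := by rw [h0, add_sub_cancel_left]
  rw [this]
  exact tsum_mem hF fun k => mono hF (Nat.one_le_iff_ne_zero.mpr (Nat.succ_ne_zero k))
    (term_mem hF ha (k + 1))

theorem pow_diff (hF : IsCompleteFiltration K F) {a ξ : A} {n : ℕ} (ha : a ∈ F 1)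
    (hξ : ξ ∈ F n) (hn : 1 ≤ n) (k : ℕ) : (a + ξ) ^ (k + 1) - a ^ (k + 1) ∈ F (n + k) := by
  induction k with
  | zero => simpa using hξ
  | succ k ih =>
    have key : (a + ξ) ^ (k + 2) - a ^ (k + 2)
        = ((a + ξ) ^ (k + 1) - a ^ (k + 1)) * (a + ξ) + a ^ (k + 1) * ξ := by
      rw [pow_succ, pow_succ]; noncomm_ring
    rw [key]
    have h1 : ((a + ξ) ^ (k + 1) - a ^ (k + 1)) * (a + ξ) ∈ F (n + k + 1) :=
      hF.2.2.1 (n + k) 1 _ ih _ (add_mem ha (mono hF hn hξ))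
    have h2 : a ^ (k + 1) * ξ ∈ F (k + 1 + n) :=
      hF.2.2.1 (k + 1) n _ (pow_mem hF ha (k + 1)) _ hξ
    have h2' : a ^ (k + 1) * ξ ∈ F (n + (k + 1)) := by
      rwa [Nat.add_comm (k+1) n] at h2
    exact add_mem (by rwa [Nat.add_assoc] at h1) h2'

theorem exp_add_mem (hF : IsCompleteFiltration K F) {a ξ : A} {n : ℕ} (ha : a ∈ F 1)
    (hξ : ξ ∈ F n) (hn : 1 ≤ n) : expS K (a + ξ) - expS K a - ξ ∈ F (n + 1) := by
  have haξ : a + ξ ∈ F 1 := add_mem ha (mono hF hn hξ)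
  set d : ℕ → A := fun k => term K (a + ξ) k - term K a k - (if k = 1 then ξ else 0) with hd_def
  have hind : Summable (fun k : ℕ => if k = 1 then ξ else (0 : A)) :=
    summable_of_ne_finset_zero (s := {1}) (fun b hb => by
      simp only [Finset.mem_singleton] at hb; simp [hb])
  have hd : ∀ k, d k ∈ F (n + 1) := by
    intro k
    match k with
    | 0 => simp [hd_def, term_zero]
    | 1 => simp [hd_def, term_one]
    | (k + 2) =>
      have : d (k + 2) = ((k + 2).factorial : K)⁻¹ • ((a + ξ) ^ (k + 2) - a ^ (k + 2)) := by
        simp [hd_def, term, smul_sub]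
      rw [this]
      refine Submodule.smul_mem _ _ (mono hF ?_ (pow_diff hF ha hξ hn (k + 1)))
      omega
  have hsum1 := summable_term hF haξ
  have hsum2 := summable_term hF ha
  have hindsum : ∑' k, (if k = 1 then ξ else (0 : A)) = ξ := by
    rw [tsum_eq_single 1 (fun k hk => if_neg hk)]; simp
  have htsum : ∑' k, d k = expS K (a + ξ) - expS K a - ξ := by
    rw [hd_def]
    rw [Summable.tsum_sub ((hsum1.sub hsum2)) hind, Summable.tsum_sub hsum1 hsum2, hindsum, expS_eq, expS_eq]
  exact htsum ▸ tsum_mem hF hd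

theorem exp_mul_mem (hF : IsCompleteFiltration K F) {a b ξ η : A} {n : ℕ} (ha : a ∈ F 1)
    (hb : b ∈ F 1) (hξ : ξ ∈ F n) (hη : η ∈ F n) (hn : 1 ≤ n) :
    expS K (a + ξ) * expS K (b + η) - expS K a * expS K b - ξ - η ∈ F (n + 1) := by
  set u : A := expS K (a + ξ) - expS K a - ξ with hu_def
  set v : A := expS K (b + η) - expS K b - η with hv_def
  have hu : u ∈ F (n + 1) := exp_add_mem hF ha hξ hn
  have hv : v ∈ F (n + 1) := exp_add_mem hF hb hη hn
  have h1 : expS K (a + ξ) = expS K a + ξ + u := by rw [hu_def]; abel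
  have h2 : expS K (b + η) = expS K b + η + v := by rw [hv_def]; abel
  have key : expS K (a + ξ) * expS K (b + η) - expS K a * expS K b - ξ - η
      = (expS K a - 1) * η + expS K a * v + ξ * (expS K b - 1) + ξ * η + ξ * v
        + u * expS K b + u * η + u * v := by
    rw [h1, h2]; noncomm_ring
  rw [key]
  have m1 : (expS K a - 1) * η ∈ F (n + 1) := by
    have := hF.2.2.1 1 n _ (expS_sub_one_mem hF ha) _ hη
    rwa [Nat.add_comm 1 n] at this
  have m3 : ξ * (expS K b - 1) ∈ F (n + 1) := hF.2.2.1 n 1 _ hξ _ (expS_sub_one_mem hF hb)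
  have m4 : ξ * η ∈ F (n + 1) := mono hF (by omega) (hF.2.2.1 n n _ hξ _ hη)
  exact add_mem (add_mem (add_mem (add_mem (add_mem (add_mem (add_mem m1
    (mul_left hF _ hv)) m3) m4) (mono hF (by omega) (hF.2.2.1 n (n+1) _ hξ _ hv)))
    (mul_right hF hu _)) (mul_right hF hu _)) (mul_right hF hu _)

theorem lim_exists (hF : IsCompleteFiltration K F) {u : ℕ → A}
    (h : ∀ m, u (m + 1) - u m ∈ F (m + 1)) :
    ∃ l : A, ∀ m, l - u m ∈ F (m + 1) := by
  have hdiff : ∀ m k, u (m + k) - u m ∈ F (m + 1) := by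
    intro m k
    induction k with
    | zero => simpa using zero_mem _
    | succ k ih =>
      have : u (m + (k + 1)) - u m = (u (m + k + 1) - u (m + k)) + (u (m + k) - u m) := by
        rw [← Nat.add_assoc]; abel
      rw [this]
      exact add_mem (mono hF (by omega) (h (m + k))) ih
  have hdiff' : ∀ {k l : ℕ}, k ≤ l → u l - u k ∈ F (k + 1) := by
    intro k l hkl
    have := hdiff k (l - k)
    rwa [Nat.add_sub_cancel' hkl] at this
  have hcauchy : CauchySeq u := by
    rw [cauchySeq_iff]
    intro V hV
    rw [uniformity_eq_comap_nhds_zero A] at hV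
    obtain ⟨t, ht, htV⟩ := hV
    obtain ⟨N, hN⟩ := hF.2.2.2.2 t ht
    refine ⟨N, fun k hk l hl => ?_⟩
    have hmem : u l - u k ∈ F N := by
      rcases le_total k l with hkl | hlk
      · exact mono hF (by omega) (hdiff' hkl)
      · have := neg_mem (mono hF (by omega : N ≤ l + 1) (hdiff' hlk))
        simpa using this
    exact htV (hN hmem)
  obtain ⟨l, hl⟩ := cauchySeq_tendsto_of_complete hcauchy
  refine ⟨l, fun m => ?_⟩
  have htend : Filter.Tendsto (fun k => u k - u m) Filter.atTop (nhds (l - u m)) :=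
    hl.sub tendsto_const_nhds
  refine (closed hF (m + 1)).mem_of_tendsto htend ?_
  filter_upwards [Filter.eventually_ge_atTop m] with k hk
  exact mono hF le_rfl (hdiff' hk)

theorem factor_existsUnique (hF : IsCompleteFiltration K F) (P : A →ₗ[K] A)
    (hP : ∀ n, ∀ x ∈ F n, P x ∈ F n) (hPP : ∀ x : A, P (P x) = P x) {g : A}
    (hg : g - 1 ∈ F 1) :
    ∃! p : A × A, (p.1 ∈ F 1 ∧ P p.1 = p.1) ∧ (p.2 ∈ F 1 ∧ P p.2 = 0) ∧
      expS K p.1 * expS K p.2 = g := by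
  have hmem_all : ∀ {z : A}, (∀ m : ℕ, z ∈ F (m + 1)) → z = 0 := by
    intro z hz
    refine eq_zero hF fun n => ?_
    cases n with
    | zero => rw [hF.1]; trivial
    | succ m => exact hz m
  have huniq : ∀ p q : A × A,
      ((p.1 ∈ F 1 ∧ P p.1 = p.1) ∧ (p.2 ∈ F 1 ∧ P p.2 = 0) ∧ expS K p.1 * expS K p.2 = g) →
      ((q.1 ∈ F 1 ∧ P q.1 = q.1) ∧ (q.2 ∈ F 1 ∧ P q.2 = 0) ∧ expS K q.1 * expS K q.2 = g) →
      p = q := by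
    rintro p q ⟨⟨hp1F, hp1P⟩, ⟨hp2F, hp2P⟩, hpe⟩ ⟨⟨hq1F, hq1P⟩, ⟨hq2F, hq2P⟩, hqe⟩
    have key : ∀ n : ℕ, p.1 - q.1 ∈ F (n + 1) ∧ p.2 - q.2 ∈ F (n + 1) := by
      intro n
      induction n with
      | zero => exact ⟨sub_mem hp1F hq1F, sub_mem hp2F hq2F⟩
      | succ n ih =>
        obtain ⟨hξ, hη⟩ := ih
        have hw := exp_mul_mem hF hq1F hq2F hξ hη (by omega)
        have he1 : q.1 + (p.1 - q.1) = p.1 := by abel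
        have he2 : q.2 + (p.2 - q.2) = p.2 := by abel
        rw [he1, he2, hpe, hqe] at hw
        have hsum : (p.1 - q.1) + (p.2 - q.2) ∈ F (n + 1 + 1) := by
          have h3 : (p.1 - q.1) + (p.2 - q.2)
              = -(g - g - (p.1 - q.1) - (p.2 - q.2)) := by abel
          rw [h3]; exact neg_mem hw
        have hPsum : p.1 - q.1 ∈ F (n + 1 + 1) := by
          have := hP (n + 1 + 1) _ hsum
          rwa [map_add, map_sub, map_sub, hp1P, hq1P, hp2P, hq2P, sub_zero, add_zero] at this
        exact ⟨hPsum, by simpa using sub_mem hsum hPsum⟩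
    have h1 : p.1 - q.1 = 0 := hmem_all fun m => (key m).1
    have h2 : p.2 - q.2 = 0 := hmem_all fun m => (key m).2
    exact Prod.ext (sub_eq_zero.mp h1) (sub_eq_zero.mp h2)
  classical
  set step : A × A → A × A := fun q =>
    (q.1 + P (g - expS K q.1 * expS K q.2),
     q.2 + ((g - expS K q.1 * expS K q.2) - P (g - expS K q.1 * expS K q.2))) with hstep
  set s : ℕ → A × A := fun n => step^[n] (0, 0) with hs
  have hs0 : s 0 = (0, 0) := rfl
  have hssucc : ∀ n, s (n + 1) = step (s n) := fun n => Function.iterate_succ_apply' step n _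
  have inv : ∀ n, (s n).1 ∈ F 1 ∧ P (s n).1 = (s n).1 ∧ (s n).2 ∈ F 1 ∧ P (s n).2 = 0 ∧
      g - expS K (s n).1 * expS K (s n).2 ∈ F (n + 1) := by
    intro n
    induction n with
    | zero =>
      refine ⟨zero_mem _, map_zero _, zero_mem _, map_zero _, ?_⟩
      rw [hs0]; simpa [expS_zero] using hg
    | succ n ih =>
      obtain ⟨hx, hxP, hy, hyP, hδ⟩ := ih
      have hPδ : P (g - expS K (s n).1 * expS K (s n).2) ∈ F (n + 1) := hP _ _ hδ
      have hηδ : (g - expS K (s n).1 * expS K (s n).2)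
          - P (g - expS K (s n).1 * expS K (s n).2) ∈ F (n + 1) := sub_mem hδ hPδ
      have hs1 : (s (n + 1)).1 = (s n).1 + P (g - expS K (s n).1 * expS K (s n).2) := by
        rw [hssucc]
      have hs2 : (s (n + 1)).2 = (s n).2 + ((g - expS K (s n).1 * expS K (s n).2)
          - P (g - expS K (s n).1 * expS K (s n).2)) := by
        rw [hssucc]
      have hn1 : (1 : ℕ) ≤ n + 1 := by omega
      refine ⟨?_, ?_, ?_, ?_, ?_⟩
      · rw [hs1]; exact add_mem hx (mono hF hn1 hPδ)
      · rw [hs1, map_add, hxP, hPP]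
      · rw [hs2]; exact add_mem hy (mono hF hn1 hηδ)
      · rw [hs2, map_add, hyP, map_sub, hPP, sub_self, add_zero]
      · rw [hs1, hs2]
        have hw := exp_mul_mem hF hx hy hPδ hηδ hn1
        have hrw : g - expS K ((s n).1 + P (g - expS K (s n).1 * expS K (s n).2))
              * expS K ((s n).2 + ((g - expS K (s n).1 * expS K (s n).2)
                - P (g - expS K (s n).1 * expS K (s n).2)))
            = -(expS K ((s n).1 + P (g - expS K (s n).1 * expS K (s n).2))
              * expS K ((s n).2 + ((g - expS K (s n).1 * expS K (s n).2)
                - P (g - expS K (s n).1 * expS K (s n).2)))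
              - expS K (s n).1 * expS K (s n).2
              - P (g - expS K (s n).1 * expS K (s n).2)
              - ((g - expS K (s n).1 * expS K (s n).2)
                - P (g - expS K (s n).1 * expS K (s n).2))) := by abel
        rw [hrw]
        exact neg_mem hw
  have hdx : ∀ m, (s (m + 1)).1 - (s m).1 ∈ F (m + 1) := by
    intro m
    have hs1 : (s (m + 1)).1 = (s m).1 + P (g - expS K (s m).1 * expS K (s m).2) := by
      rw [hssucc]
    rw [hs1]
    simpa using hP _ _ (inv m).2.2.2.2
  have hdy : ∀ m, (s (m + 1)).2 - (s m).2 ∈ F (m + 1) := by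
    intro m
    have hs2 : (s (m + 1)).2 = (s m).2 + ((g - expS K (s m).1 * expS K (s m).2)
        - P (g - expS K (s m).1 * expS K (s m).2)) := by rw [hssucc]
    rw [hs2]
    simpa using sub_mem (inv m).2.2.2.2 (hP _ _ (inv m).2.2.2.2)
  obtain ⟨x, hxl⟩ := lim_exists hF (u := fun m => (s m).1) hdx
  obtain ⟨y, hyl⟩ := lim_exists hF (u := fun m => (s m).2) hdy
  have hxF : x ∈ F 1 := by
    have := hxl 0
    rw [hs0] at this; simpa using this
  have hyF : y ∈ F 1 := by
    have := hyl 0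
    rw [hs0] at this; simpa using this
  have hxP : P x = x := by
    have h0 : P x - x = 0 := hmem_all fun m => by
      have h1 : P (x - (s m).1) ∈ F (m + 1) := hP _ _ (hxl m)
      have h2 : P x - x = P (x - (s m).1) - (x - (s m).1) := by
        rw [map_sub, (inv m).2.1]; abel
      rw [h2]; exact sub_mem h1 (hxl m)
    exact sub_eq_zero.mp h0
  have hyP : P y = 0 := by
    refine hmem_all fun m => ?_
    have h2 : P y = P (y - (s m).2) := by
      rw [map_sub, (inv m).2.2.2.1, sub_zero]
    rw [h2]; exact hP _ _ (hyl m)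
  have heq : expS K x * expS K y = g := by
    have h0 : g - expS K x * expS K y = 0 := hmem_all fun m => by
      have hξ := hxl m
      have hη := hyl m
      have hw := exp_mul_mem hF (inv m).1 (inv m).2.2.1 hξ hη (by omega)
      have he1 : (s m).1 + (x - (s m).1) = x := by abel
      have he2 : (s m).2 + (y - (s m).2) = y := by abel
      rw [he1, he2] at hw
      have hδ := (inv m).2.2.2.2
      have hrw : g - expS K x * expS K y
          = (g - expS K (s m).1 * expS K (s m).2)
            - (x - (s m).1) - (y - (s m).2)
            - (expS K x * expS K y - expS K (s m).1 * expS K (s m).2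
               - (x - (s m).1) - (y - (s m).2)) := by abel
      rw [hrw]
      exact sub_mem (sub_mem (sub_mem hδ hξ) hη) (mono hF (by omega) hw)
    exact (sub_eq_zero.mp h0).symm
  exact ⟨(x, y), ⟨⟨hxF, hxP⟩, ⟨hyF, hyP⟩, heq⟩, fun q hq => huniq q (x, y) hq
    ⟨⟨hxF, hxP⟩, ⟨hyF, hyP⟩, heq⟩⟩

theorem prod_sub_one_mem (hF : IsCompleteFiltration K F) {a b : A} (ha : a ∈ F 1)
    (hb : b ∈ F 1) : expS K a * expS K b - 1 ∈ F 1 := by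
  have h1 := expS_sub_one_mem hF ha
  have h2 := expS_sub_one_mem hF hb
  have key : expS K a * expS K b - 1
      = (expS K a - 1) * (expS K b - 1) + (expS K a - 1) + (expS K b - 1) := by noncomm_ring
  rw [key]
  exact add_mem (add_mem (mono hF (by omega) (hF.2.2.1 1 1 _ h1 _ h2)) h1) h2

end Stmt7Aux

open Stmt7Aux in
theorem stmt7 (F : ℕ → Submodule K A) (hF : IsCompleteFiltration K F)
    (P : A →ₗ[K] A) (hP : ∀ n, ∀ x ∈ F n, P x ∈ F n)
    (hPP : ∀ x : A, P (P x) = P x) :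
    ∃ Ψ : A × A → A × A,
      (Set.BijOn Ψ (((fun x => x - P x) '' (F 1 : Set A)) ×ˢ (⇑P '' (F 1 : Set A)))
          ((⇑P '' (F 1 : Set A)) ×ˢ ((fun x => x - P x) '' (F 1 : Set A))) ∧
        ∀ p ∈ ((fun x => x - P x) '' (F 1 : Set A)) ×ˢ (⇑P '' (F 1 : Set A)),
          expS K p.1 * expS K p.2 = expS K (Ψ p).1 * expS K (Ψ p).2) ∧
      ∀ Ψ' : A × A → A × A,
        (Set.BijOn Ψ' (((fun x => x - P x) '' (F 1 : Set A)) ×ˢ (⇑P '' (F 1 : Set A)))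
            ((⇑P '' (F 1 : Set A)) ×ˢ ((fun x => x - P x) '' (F 1 : Set A))) ∧
          ∀ p ∈ ((fun x => x - P x) '' (F 1 : Set A)) ×ˢ (⇑P '' (F 1 : Set A)),
            expS K p.1 * expS K p.2 = expS K (Ψ' p).1 * expS K (Ψ' p).2) →
        Set.EqOn Ψ' Ψ (((fun x => x - P x) '' (F 1 : Set A)) ×ˢ (⇑P '' (F 1 : Set A))) := by

  classical
  set Q : A →ₗ[K] A := LinearMap.id - P with hQdef
  have hQapp : ∀ x : A, Q x = x - P x := fun x => by
    simp [hQdef, LinearMap.sub_apply]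
  have hQ : ∀ n, ∀ x ∈ F n, Q x ∈ F n := fun n x hx => by
    rw [hQapp]; exact sub_mem hx (hP n x hx)
  have hQQ : ∀ x : A, Q (Q x) = Q x := fun x => by
    rw [hQapp, hQapp, map_sub, hPP, sub_self, sub_zero]
  -- image characterizations
  have himP : ∀ z : A, z ∈ ⇑P '' (F 1 : Set A) ↔ z ∈ F 1 ∧ P z = z := by
    intro z
    constructor
    · rintro ⟨x, hx, rfl⟩; exact ⟨hP 1 x hx, hPP x⟩
    · rintro ⟨hz, hzP⟩; exact ⟨z, hz, hzP⟩
  have himQ : ∀ z : A, z ∈ (fun x => x - P x) '' (F 1 : Set A) ↔ z ∈ F 1 ∧ P z = 0 := by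
    intro z
    constructor
    · rintro ⟨x, hx, rfl⟩
      exact ⟨sub_mem hx (hP 1 x hx), by rw [map_sub, hPP, sub_self]⟩
    · rintro ⟨hz, hzP⟩
      exact ⟨z, hz, by show z - P z = z; rw [hzP, sub_zero]⟩
  -- domain elements give products with product - 1 ∈ F 1
  have hdom : ∀ p : A × A,
      p ∈ ((fun x => x - P x) '' (F 1 : Set A)) ×ˢ (⇑P '' (F 1 : Set A)) →
      expS K p.1 * expS K p.2 - 1 ∈ F 1 := by
    rintro p ⟨h1, h2⟩
    exact prod_sub_one_mem hF ((himQ p.1).mp h1).1 ((himP p.2).mp h2).1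
  have htar : ∀ p : A × A,
      p ∈ (⇑P '' (F 1 : Set A)) ×ˢ ((fun x => x - P x) '' (F 1 : Set A)) →
      expS K p.1 * expS K p.2 - 1 ∈ F 1 := by
    rintro p ⟨h1, h2⟩
    exact prod_sub_one_mem hF ((himP p.1).mp h1).1 ((himQ p.2).mp h2).1
  -- definition of Ψ
  set Ψ : A × A → A × A := fun p =>
    if h : expS K p.1 * expS K p.2 - 1 ∈ F 1 then
      (factor_existsUnique hF P hP hPP h).exists.choose
    else (0, 0) with hΨdef
  have hΨspec : ∀ p : A × A, (h : expS K p.1 * expS K p.2 - 1 ∈ F 1) →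
      ((Ψ p).1 ∈ F 1 ∧ P (Ψ p).1 = (Ψ p).1) ∧ ((Ψ p).2 ∈ F 1 ∧ P (Ψ p).2 = 0) ∧
        expS K (Ψ p).1 * expS K (Ψ p).2 = expS K p.1 * expS K p.2 := by
    intro p h
    have : Ψ p = (factor_existsUnique hF P hP hPP h).exists.choose := by
      rw [hΨdef]; exact dif_pos h
    rw [this]
    exact (factor_existsUnique hF P hP hPP h).exists.choose_spec
  -- Ψ p is THE P-factorization; uniqueness tool
  have hPuniq : ∀ {g : A} (hg : g - 1 ∈ F 1) (r r' : A × A),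
      ((r.1 ∈ F 1 ∧ P r.1 = r.1) ∧ (r.2 ∈ F 1 ∧ P r.2 = 0) ∧ expS K r.1 * expS K r.2 = g) →
      ((r'.1 ∈ F 1 ∧ P r'.1 = r'.1) ∧ (r'.2 ∈ F 1 ∧ P r'.2 = 0) ∧
        expS K r'.1 * expS K r'.2 = g) → r = r' := by
    intro g hg r r' hr hr'
    obtain ⟨w, _, hwu⟩ := factor_existsUnique hF P hP hPP hg
    rw [hwu r hr, hwu r' hr']
  have hmaps : Set.MapsTo Ψ (((fun x => x - P x) '' (F 1 : Set A)) ×ˢ (⇑P '' (F 1 : Set A)))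
      ((⇑P '' (F 1 : Set A)) ×ˢ ((fun x => x - P x) '' (F 1 : Set A))) := by
    intro p hp
    obtain ⟨⟨hm1, hm2⟩, ⟨hm3, hm4⟩, _⟩ := hΨspec p (hdom p hp)
    exact ⟨(himP _).mpr ⟨hm1, hm2⟩, (himQ _).mpr ⟨hm3, hm4⟩⟩
  have heq : ∀ p ∈ ((fun x => x - P x) '' (F 1 : Set A)) ×ˢ (⇑P '' (F 1 : Set A)),
      expS K p.1 * expS K p.2 = expS K (Ψ p).1 * expS K (Ψ p).2 := by
    intro p hp
    exact ((hΨspec p (hdom p hp)).2.2).symm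
  -- domain elements as Q-factorizations
  have hdomQ : ∀ p : A × A,
      p ∈ ((fun x => x - P x) '' (F 1 : Set A)) ×ˢ (⇑P '' (F 1 : Set A)) →
      (p.1 ∈ F 1 ∧ Q p.1 = p.1) ∧ (p.2 ∈ F 1 ∧ Q p.2 = 0) := by
    rintro p ⟨h1, h2⟩
    obtain ⟨ha, haP⟩ := (himQ p.1).mp h1
    obtain ⟨hb, hbP⟩ := (himP p.2).mp h2
    exact ⟨⟨ha, by rw [hQapp, haP, sub_zero]⟩, ⟨hb, by rw [hQapp, hbP, sub_self]⟩⟩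
  have hinj : Set.InjOn Ψ (((fun x => x - P x) '' (F 1 : Set A)) ×ˢ (⇑P '' (F 1 : Set A))) := by
    intro p hp p' hp' hpp
    have e1 := (hΨspec p (hdom p hp)).2.2
    have e2 := (hΨspec p' (hdom p' hp')).2.2
    rw [hpp] at e1
    have hgg : expS K p.1 * expS K p.2 = expS K p'.1 * expS K p'.2 := by
      rw [← e1, ← e2]
    obtain ⟨w, _, hwu⟩ := factor_existsUnique hF Q hQ hQQ (hdom p' hp')
    have hq1 : (p.1 ∈ F 1 ∧ Q p.1 = p.1) ∧ (p.2 ∈ F 1 ∧ Q p.2 = 0) ∧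
        expS K p.1 * expS K p.2 = expS K p'.1 * expS K p'.2 :=
      ⟨(hdomQ p hp).1, (hdomQ p hp).2, hgg⟩
    have hq2 : (p'.1 ∈ F 1 ∧ Q p'.1 = p'.1) ∧ (p'.2 ∈ F 1 ∧ Q p'.2 = 0) ∧
        expS K p'.1 * expS K p'.2 = expS K p'.1 * expS K p'.2 :=
      ⟨(hdomQ p' hp').1, (hdomQ p' hp').2, rfl⟩
    rw [hwu p hq1, hwu p' hq2]
  have hsurj : Set.SurjOn Ψ (((fun x => x - P x) '' (F 1 : Set A)) ×ˢ (⇑P '' (F 1 : Set A)))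
      ((⇑P '' (F 1 : Set A)) ×ˢ ((fun x => x - P x) '' (F 1 : Set A))) := by
    intro q hq
    have hg : expS K q.1 * expS K q.2 - 1 ∈ F 1 := htar q hq
    obtain ⟨r, ⟨⟨hr1, hr1Q⟩, ⟨hr2, hr2Q⟩, hre⟩, _⟩ := factor_existsUnique hF Q hQ hQQ hg
    have hr1P : P r.1 = 0 := by
      have := hQapp r.1
      rw [hr1Q] at this
      have : P r.1 = r.1 - r.1 := by
        nth_rewrite 1 [show P r.1 = r.1 - Q r.1 from by rw [hQapp]; abel]
        rw [hr1Q]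
      simpa using this
    have hr2P : P r.2 = r.2 := by
      have h0 : r.2 - P r.2 = 0 := by rw [← hQapp, hr2Q]
      have := sub_eq_zero.mp h0
      exact this.symm
    have hrdom : r ∈ ((fun x => x - P x) '' (F 1 : Set A)) ×ˢ (⇑P '' (F 1 : Set A)) :=
      ⟨(himQ _).mpr ⟨hr1, hr1P⟩, (himP _).mpr ⟨hr2, hr2P⟩⟩
    refine ⟨r, hrdom, ?_⟩
    -- Ψ r = q
    have hspec := hΨspec r (hdom r hrdom)
    obtain ⟨hq1, hq2⟩ := hq
    obtain ⟨hqa, hqaP⟩ := (himP q.1).mp hq1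
    obtain ⟨hqb, hqbP⟩ := (himQ q.2).mp hq2
    refine hPuniq hg (Ψ r) q ?_ ?_
    · exact ⟨hspec.1, hspec.2.1, by rw [hspec.2.2, hre]⟩
    · exact ⟨⟨hqa, hqaP⟩, ⟨hqb, hqbP⟩, rfl⟩
  refine ⟨Ψ, ⟨⟨hmaps, hinj, hsurj⟩, heq⟩, ?_⟩
  intro Ψ' ⟨hbij', heq'⟩ p hp
  have hg : expS K p.1 * expS K p.2 - 1 ∈ F 1 := hdom p hp
  have htar' := hbij'.mapsTo hp
  obtain ⟨ht1, ht2⟩ := htar'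
  obtain ⟨ha, haP⟩ := (himP (Ψ' p).1).mp ht1
  obtain ⟨hb, hbP⟩ := (himQ (Ψ' p).2).mp ht2
  have hspec := hΨspec p hg
  refine hPuniq hg (Ψ' p) (Ψ p) ?_ ?_
  · exact ⟨⟨ha, haP⟩, ⟨hb, hbP⟩, (heq' p hp).symm⟩
  · exact ⟨hspec.1, hspec.2.1, hspec.2.2⟩
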